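/- Let U ⊆ ℂ^m be open and let z : U → ℂ be real-differentiable with Ψ̃(q, z(q)) = 0 and ∂Ψ̃/∂ζ(q, z(q)) ≠ 0 for all q ∈ U. Then z is invariant under radial projection, i.e. (fderiv ℝ z q)(q) = 0 for every q ∈ U, if and only if Σ_{i=1}^m w^i · (∂Ψ/∂w^i) vanishes at (w(q, z(q)), z(q)) for every q ∈ U. In particular, if Ψ satisfies Condition (H) — Σ_{i=1}^m w_i · (∂Ψ/∂w^i)(w, ζ) = 0 for every (w, ζ) ∈ ℂ^m × ℂ with Ψ(w, ζ) = 0 — then every such solution z satisfies (fderiv ℝ z q)(q) = 0 throughout U, i.e. Σ_{j=1}^{2m} x^j · ∂z/∂x^j = 0, so z is constant along rays through the origin. -/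

import Mathlib

open Matrix

theorem radial_aux_key
    (m : ℕ)
    (M : ℂ → Matrix (Fin m) (Fin m) ℂ)
    (hM : ∀ i j, Differentiable ℂ (fun ζ => M ζ i j))
    (Ψ : ((Fin m → ℂ) × ℂ) → ℂ) (hΨ : Differentiable ℂ Ψ)
    (U : Set (Fin m → ℂ)) (hU : IsOpen U)
    (z : (Fin m → ℂ) → ℂ) (hz : DifferentiableOn ℝ z U)
    (hsol : ∀ q ∈ U, Ψ (q - (M (z q)).mulVec (star q), z q) = 0)
    (q : Fin m → ℂ) (hq : q ∈ U) :
    (∑ i, (q - (M (z q)).mulVec (star q)) i *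
        fderiv ℂ Ψ (q - (M (z q)).mulVec (star q), z q) (Pi.single i 1, 0))
      + fderiv ℝ z q q * deriv (fun ζ => Ψ (q - (M ζ).mulVec (star q), ζ)) (z q) = 0 := by
  set ζ₀ := z q with hζ₀
  set w₀ : Fin m → ℂ := q - (M ζ₀).mulVec (star q) with hw₀
  -- the scaling identity
  have hscale : ∀ (t : ℝ) (A : Matrix (Fin m) (Fin m) ℂ),
      (1 + (t:ℂ)) • (q - A.mulVec (star q)) = ((1+t) • q) - A.mulVec (star ((1+t) • q)) := by
    intro t A
    have h : ((1+t : ℝ) • q) = (1 + (t:ℂ)) • q := by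
      funext i; simp [Complex.real_smul]
    rw [h, star_smul, smul_sub]
    congr 1
    rw [Matrix.mulVec_smul]
    congr 1
    simp
  -- inner holomorphic map and H
  set φ : ℂ × ℂ → (Fin m → ℂ) × ℂ :=
    fun p => ((1 + p.1) • (q - (M p.2).mulVec (star q)), p.2) with hφdef
  have hφ : Differentiable ℂ φ := by
    apply Differentiable.prodMk _ differentiable_snd
    apply Differentiable.fun_smul
    · exact (differentiable_const 1).add differentiable_fst
    · rw [differentiable_pi]
      intro i
      simp only [Pi.sub_apply, Matrix.mulVec, dotProduct]
      exact (differentiable_const _).sub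
        (Differentiable.fun_sum fun j _ =>
          ((hM i j).comp differentiable_snd).mul (differentiable_const _))
  set H : ℂ × ℂ → ℂ := fun p => Ψ (φ p) with hHdef
  have hH : DifferentiableAt ℂ H (0, ζ₀) := (hΨ _).comp _ (hφ _)
  set L := fderiv ℂ H (0, ζ₀) with hL
  have hHf : HasFDerivAt H L (0, ζ₀) := hH.hasFDerivAt
  have hHr : HasFDerivAt H (L.restrictScalars ℝ) (0, ζ₀) := hHf.restrictScalars ℝ
  -- the real curve
  have hzq : DifferentiableAt ℝ z q := (hz q hq).differentiableAt (hU.mem_nhds hq)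
  have hα : HasDerivAt (fun t : ℝ => (1+t) • q) q 0 := by
    simpa using ((hasDerivAt_id (0:ℝ)).const_add 1).smul_const q
  have hc : HasDerivAt (fun t : ℝ => z ((1+t) • q)) (fderiv ℝ z q q) 0 := by
    have h1 : HasFDerivAt z (fderiv ℝ z q) ((1+(0:ℝ)) • q) := by
      simpa using hzq.hasFDerivAt
    exact h1.comp_hasDerivAt 0 hα
  set γ : ℝ → ℂ × ℂ := fun t => ((t:ℂ), z ((1+t) • q)) with hγdef
  have hγ : HasDerivAt γ (1, fderiv ℝ z q q) 0 :=
    Complex.ofRealCLM.hasDerivAt.prodMk hc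
  have hγ0 : γ 0 = (0, ζ₀) := by simp [hγdef, hζ₀]
  have hf : HasDerivAt (fun t => H (γ t)) ((L.restrictScalars ℝ) (1, fderiv ℝ z q q)) 0 :=
    (hγ0 ▸ hHr).comp_hasDerivAt 0 hγ
  -- f vanishes near 0
  have hev : (fun t => H (γ t)) =ᶠ[nhds (0:ℝ)] fun _ => 0 := by
    have hcont : Continuous fun t : ℝ => (1+t) • q :=
      (continuous_const.add continuous_id).smul continuous_const
    have hmem : ∀ᶠ t : ℝ in nhds 0, (1+t) • q ∈ U := by
      have h0 : (1+(0:ℝ)) • q ∈ U := by simpa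
      exact hcont.continuousAt.eventually_mem (hU.mem_nhds h0)
    filter_upwards [hmem] with t ht
    have hs := hsol _ ht
    show Ψ ((1 + (t:ℂ)) • (q - (M (z ((1+t) • q))).mulVec (star q)), z ((1+t) • q)) = 0
    rw [hscale]
    exact hs
  have h0 : (L.restrictScalars ℝ) (1, fderiv ℝ z q q) = 0 := by
    have hd := hf.deriv
    rw [hev.deriv_eq] at hd
    simp only [deriv_const'] at hd
    exact hd.symm
  have h0' : L (1, fderiv ℝ z q q) = 0 := h0
  -- split
  have hsplit : L (1, fderiv ℝ z q q) = L (1, 0) + fderiv ℝ z q q * L (0, 1) := by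
    have hv : ((1:ℂ), fderiv ℝ z q q) = ((1:ℂ), (0:ℂ)) + fderiv ℝ z q q • ((0:ℂ), (1:ℂ)) := by
      simp [Prod.ext_iff]
    rw [hv, map_add, ContinuousLinearMap.map_smul, smul_eq_mul]
  -- compute L (0,1)
  have hβ : HasDerivAt (fun ζ : ℂ => (((0:ℂ), ζ) : ℂ × ℂ)) (0, 1) ζ₀ :=
    (hasDerivAt_const _ _).prodMk (hasDerivAt_id _)
  have hD : HasDerivAt (fun ζ => H (0, ζ)) (L (0, 1)) ζ₀ :=
    hHf.comp_hasDerivAt ζ₀ hβ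
  have hDfun : (fun ζ => H ((0:ℂ), ζ)) = fun ζ => Ψ (q - (M ζ).mulVec (star q), ζ) := by
    funext ζ; simp [hHdef, hφdef]
  rw [hDfun] at hD
  have hDval : deriv (fun ζ => Ψ (q - (M ζ).mulVec (star q), ζ)) ζ₀ = L (0, 1) := hD.deriv
  -- compute L (1,0)
  have hδ : HasDerivAt (fun s : ℂ => ((s, ζ₀) : ℂ × ℂ)) (1, 0) 0 :=
    (hasDerivAt_id _).prodMk (hasDerivAt_const _ _)
  have hE : HasDerivAt (fun s => H (s, ζ₀)) (L (1, 0)) 0 :=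
    by have h := HasFDerivAt.comp_hasDerivAt (0:ℂ) hHf hδ; exact h
  have hη : HasDerivAt (fun s : ℂ => (((1+s) • w₀, ζ₀) : (Fin m → ℂ) × ℂ)) (w₀, 0) 0 := by
    have h1 : HasDerivAt (fun s : ℂ => (1+s) • w₀) w₀ 0 := by
      simpa using ((hasDerivAt_id (0:ℂ)).const_add 1).smul_const w₀
    exact h1.prodMk (hasDerivAt_const _ _)
  have hΨat : HasFDerivAt Ψ (fderiv ℂ Ψ (w₀, ζ₀)) ((1+(0:ℂ)) • w₀, ζ₀) := by
    simpa using (hΨ (w₀, ζ₀)).hasFDerivAt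
  have hE2 : HasDerivAt (fun s : ℂ => Ψ ((1+s) • w₀, ζ₀)) (fderiv ℂ Ψ (w₀, ζ₀) (w₀, 0)) 0 :=
    hΨat.comp_hasDerivAt 0 hη
  have hEfun : (fun s : ℂ => H (s, ζ₀)) = fun s : ℂ => Ψ ((1+s) • w₀, ζ₀) := rfl
  rw [hEfun] at hE
  have hEval : L (1, 0) = fderiv ℂ Ψ (w₀, ζ₀) (w₀, 0) := hE.unique hE2
  -- expand into the sum
  have hvec : ((w₀, 0) : (Fin m → ℂ) × ℂ)
      = ∑ i, w₀ i • ((Pi.single i 1 : Fin m → ℂ), (0:ℂ)) := by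
    rw [Prod.ext_iff]
    constructor
    · rw [Prod.fst_sum]
      funext j
      simp [Finset.sum_apply, Pi.single_apply]
    · rw [Prod.snd_sum]
      simp
  have hsum : fderiv ℂ Ψ (w₀, ζ₀) (w₀, 0)
      = ∑ i, w₀ i * fderiv ℂ Ψ (w₀, ζ₀) (Pi.single i 1, 0) := by
    rw [hvec, map_sum]
    refine Finset.sum_congr rfl fun i _ => ?_
    rw [ContinuousLinearMap.map_smul, smul_eq_mul]
  rw [hsplit, hEval, hsum, ← hDval] at h0'
  exact h0'

/-- Theorem 4.2 of the paper. For a real-differentiable solution `z`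
of `Ψ̃(q, z(q)) = 0` with everywhere-nonvanishing `ζ`-derivative, `z` is invariant
under radial projection (`(fderiv ℝ z q)(q) = 0` on `U`) iff
`Σᵢ wⁱ·∂Ψ/∂wⁱ` vanishes at `(w(q, z(q)), z(q))` for all `q ∈ U`. In particular,
if `Ψ` satisfies Condition (H) — `Σᵢ wᵢ·(∂Ψ/∂wⁱ)(w, ζ) = 0` whenever `Ψ(w, ζ) = 0`
— then `(fderiv ℝ z q)(q) = 0` throughout `U`. -/
theorem radial_invariance_iff_conditionH
    (m : ℕ) (hm : 2 ≤ m)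
    (M : ℂ → Matrix (Fin m) (Fin m) ℂ)
    (hM : ∀ i j, Differentiable ℂ (fun ζ => M ζ i j))
    (hManti : ∀ ζ, (M ζ)ᵀ = -(M ζ))
    (Ψ : ((Fin m → ℂ) × ℂ) → ℂ) (hΨ : Differentiable ℂ Ψ)
    (U : Set (Fin m → ℂ)) (hU : IsOpen U)
    (z : (Fin m → ℂ) → ℂ) (hz : DifferentiableOn ℝ z U)
    (hsol : ∀ q ∈ U, Ψ (q - (M (z q)).mulVec (star q), z q) = 0)
    (hreg : ∀ q ∈ U,
      deriv (fun ζ => Ψ (q - (M ζ).mulVec (star q), ζ)) (z q) ≠ 0) :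
    ((∀ q ∈ U, fderiv ℝ z q q = 0) ↔
      (∀ q ∈ U,
        ∑ i, (q - (M (z q)).mulVec (star q)) i *
          fderiv ℂ Ψ (q - (M (z q)).mulVec (star q), z q) (Pi.single i 1, 0) = 0)) ∧
    ((∀ (w : Fin m → ℂ) (ζ : ℂ), Ψ (w, ζ) = 0 →
        ∑ i, w i * fderiv ℂ Ψ (w, ζ) (Pi.single i 1, 0) = 0) →
      ∀ q ∈ U, fderiv ℝ z q q = 0) := by
  have key := radial_aux_key m M hM Ψ hΨ U hU z hz hsol
  constructor
  · constructor
    · intro h q hq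
      have k := key q hq
      rw [h q hq, zero_mul, add_zero] at k
      exact k
    · intro h q hq
      have k := key q hq
      rw [h q hq, zero_add] at k
      exact (mul_eq_zero.mp k).resolve_right (hreg q hq)
  · intro hH q hq
    have k := key q hq
    rw [hH _ (z q) (hsol q hq), zero_add] at k
    exact (mul_eq_zero.mp k).resolve_right (hreg q hq)
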